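/- Let g be a semisimple Lie algebra, f a nonzero nilpotent element in an sl2-triple s = {e,h,f}, with grading g = ⊕ g_j and depth d. If E ∈ g_j, j ≥ 1, is a nilpotent element of the Z(s)-module g_j (i.e., 0 lies in the Zariski closure of the orbit Z(s)(E)), then the element f + E is a nilpotent element of the Lie algebra g. -/

import Mathlib

/-- The algebra of polynomial functions on a vector space `V`: the `F`-subalgebra of
`V → F` generated by the linear functionals. -/
def PolyFuns (F V : Type*) [Field F] [AddCommGroup V] [Module F V] :
    Subalgebra F (V → F) :=
  Algebra.adjoin F (Set.range fun φ : Module.Dual F V => (φ : V → F))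

/-- A subset of `V` is Zariski closed if it is the common zero set of a family of
polynomial functions on `V`. -/
def IsZariskiClosed (F : Type*) {V : Type*} [Field F] [AddCommGroup V] [Module F V]
    (s : Set V) : Prop :=
  ∃ P : Set (V → F), P ⊆ (PolyFuns F V : Set (V → F)) ∧
    s = {v | ∀ p ∈ P, p v = 0}

/-- `v` lies in the Zariski closure of `s`. -/
def MemZariskiClosure (F : Type*) {V : Type*} [Field F] [AddCommGroup V] [Module F V]
    (s : Set V) (v : V) : Prop :=
  ∀ C : Set V, IsZariskiClosed F C → s ⊆ C → v ∈ C

open Module Polynomial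

section Aux
variable {F : Type*} [Field F] {g : Type*} [AddCommGroup g] [Module F g] [Module.Finite F g]

omit [Module.Finite F g] in
lemma aux_const_mem (r : F) : (fun _ : g => r) ∈ PolyFuns F g := by
  have := Subalgebra.algebraMap_mem (PolyFuns F g) r
  convert this using 1
  rfl

lemma aux_eval_charpoly (A : Module.End F g) (c : F) :
    A.charpoly.eval c = LinearMap.det (c • (LinearMap.id : g →ₗ[F] g) - A) := by
  classical
  set b := Module.Free.chooseBasis F g with hb
  rw [← A.charpoly_toMatrix b, Matrix.charpoly, eval_det, Matrix.matPolyEquiv_charmatrix,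
    ← LinearMap.det_toMatrix b]
  congr 1
  rw [eval_sub, eval_X, eval_C, map_sub, map_smul, LinearMap.toMatrix_id]
  simp [Matrix.scalar, Matrix.smul_eq_diagonal_mul]

lemma aux_det_mem (A : Module.End F g) (L : g →ₗ[F] Module.End F g) :
    (fun x : g => LinearMap.det (A + L x)) ∈ PolyFuns F g := by
  classical
  set b := Module.Free.chooseBasis F g with hb
  have key : (fun x : g => LinearMap.det (A + L x)) =
      ∑ σ : Equiv.Perm (Module.Free.ChooseBasisIndex F g),
        (fun _ : g => (((Equiv.Perm.sign σ : ℤ) : F))) *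
          ∏ i, fun x : g => (LinearMap.toMatrix b b (A + L x)) (σ i) i := by
    funext x
    rw [← LinearMap.det_toMatrix b, Matrix.det_apply']
    simp [Finset.sum_apply, Finset.prod_apply]
  rw [key]
  refine Subalgebra.sum_mem _ fun σ _ =>
    mul_mem (aux_const_mem _) (Subalgebra.prod_mem _ fun i _ => ?_)
  have hsplit : (fun x : g => (LinearMap.toMatrix b b (A + L x)) (σ i) i) =
      (fun _ : g => (LinearMap.toMatrix b b A) (σ i) i) +
      (fun x : g => (LinearMap.toMatrix b b (L x)) (σ i) i) := by
    funext x; simp [map_add, Matrix.add_apply]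
  rw [hsplit]
  refine add_mem (aux_const_mem _) ?_
  refine Algebra.subset_adjoin ⟨⟨⟨fun x => (LinearMap.toMatrix b b (L x)) (σ i) i, ?_⟩, ?_⟩, rfl⟩
  · intro x y; simp [map_add, Matrix.add_apply]
  · intro c x; simp [map_smul, Matrix.smul_apply]

end Aux

/-- Let `g` be a semisimple Lie algebra, `f` a nonzero nilpotent
element included in an sl₂-triple `s = (e,h,f)`, with grading `g = ⊕ g_j` by the
eigenspaces of `ad h`.  If `E ∈ g_j`, `j ≥ 1`, is a nilpotent element of the
`Z(s)`-module `g_j` (i.e. `0` lies in the Zariski closure of the orbit `Z(s)(E)`,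
where `Z(s)` is the centralizer of the triple in the automorphism group of `g`),
then `f + E` is a nilpotent element of the Lie algebra `g`. -/
theorem cyclic_element_nilpotent_of_nilpotent_orbit
    {F : Type*} [Field F] [IsAlgClosed F] [CharZero F]
    {g : Type*} [LieRing g] [LieAlgebra F g] [Module.Finite F g]
    [LieAlgebra.IsSemisimple F g]
    (e h f : g) (hf0 : f ≠ 0)
    (hhe : ⁅h, e⁆ = 2 • e) (hhf : ⁅h, f⁆ = -(2 • f)) (hef : ⁅e, f⁆ = h)
    (hfnil : IsNilpotent ((LieAlgebra.ad F g) f))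
    (gj : ℤ → Submodule F g)
    (hgj : ∀ n : ℤ, gj n = Module.End.eigenspace ((LieAlgebra.ad F g) h) (n : F))
    (j : ℤ) (hj : 1 ≤ j) (E : g) (hE : E ∈ gj j)
    (hEnil : MemZariskiClosure F
      {x : g | ∃ σ : g ≃ₗ⁅F⁆ g, σ e = e ∧ σ h = h ∧ σ f = f ∧ σ E = x} 0) :
    IsNilpotent ((LieAlgebra.ad F g) (f + E)) := by
  classical
  have key : ∀ c : F,
      LinearMap.det (c • (LinearMap.id : g →ₗ[F] g) - (LieAlgebra.ad F g) (f + E)) =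
        c ^ finrank F g := by
    intro c
    set q : g → F := fun x =>
      LinearMap.det (c • (LinearMap.id : g →ₗ[F] g) - (LieAlgebra.ad F g) (f + x)) with hqdef
    have hqmem : q ∈ PolyFuns F g := by
      have hrw : q = fun x => LinearMap.det
          ((c • (LinearMap.id : g →ₗ[F] g) - (LieAlgebra.ad F g) f) +
            (-(LieAlgebra.ad F g : g →ₗ[F] Module.End F g)) x) := by
        funext x
        simp only [hqdef, map_add, LinearMap.neg_apply, LieHom.coe_toLinearMap]
        congr 1
        abel
      rw [hrw]
      exact aux_det_mem _ _
    have horb : ∀ x ∈ {x : g | ∃ σ : g ≃ₗ⁅F⁆ g, σ e = e ∧ σ h = h ∧ σ f = f ∧ σ E = x},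
        q x = q E := by
      rintro x ⟨σ, -, -, hσf, rfl⟩
      have hconj : c • (LinearMap.id : g →ₗ[F] g) - (LieAlgebra.ad F g) (f + σ E) =
          (σ.toLinearEquiv : g →ₗ[F] g) ∘ₗ
            (c • (LinearMap.id : g →ₗ[F] g) - (LieAlgebra.ad F g) (f + E)) ∘ₗ
            (σ.toLinearEquiv.symm : g →ₗ[F] g) := by
        ext y
        set z : g := σ.toLinearEquiv.symm y with hz
        have hy : σ z = y := σ.toLinearEquiv.apply_symm_apply y
        calc (c • (LinearMap.id : g →ₗ[F] g) - (LieAlgebra.ad F g) (f + σ E)) y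
            = c • y - ⁅f + σ E, y⁆ := by
              simp [LinearMap.sub_apply, LieAlgebra.ad_apply]
          _ = σ (c • z - ⁅f + E, z⁆) := by
              have h1 : σ (c • z - ⁅f + E, z⁆) = c • σ z - σ ⁅f + E, z⁆ := by
                show σ.toLinearEquiv (c • z - ⁅f + E, z⁆) =
                  c • σ.toLinearEquiv z - σ.toLinearEquiv ⁅f + E, z⁆
                rw [map_sub, map_smul]
              have h2 : σ (f + E) = f + σ E := by
                have : σ.toLinearEquiv (f + E) = σ.toLinearEquiv f + σ.toLinearEquiv E :=
                  map_add _ _ _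
                show σ.toLinearEquiv (f + E) = f + σ E
                rw [this]
                show σ f + σ E = f + σ E
                rw [hσf]
              rw [h1, hy, σ.map_lie, hy, h2]
          _ = ((σ.toLinearEquiv : g →ₗ[F] g) ∘ₗ
                (c • (LinearMap.id : g →ₗ[F] g) - (LieAlgebra.ad F g) (f + E)) ∘ₗ
                (σ.toLinearEquiv.symm : g →ₗ[F] g)) y := by
              simp [LinearMap.sub_apply, LieAlgebra.ad_apply, ← hz]
      simp only [hqdef]
      rw [hconj, LinearMap.det_conj]
    set p : g → F := fun x => q x - q E with hpdef
    have hpm : p ∈ PolyFuns F g := by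
      have : p = q - (fun _ : g => q E) := rfl
      rw [this]
      exact sub_mem hqmem (aux_const_mem _)
    have h0 : (0 : g) ∈ {v : g | ∀ r ∈ ({p} : Set (g → F)), r v = 0} := by
      refine hEnil _ ⟨{p}, ?_, rfl⟩ ?_
      · simpa using hpm
      · rintro x hx r hr
        rcases Set.mem_singleton_iff.mp hr with rfl
        show q x - q E = 0
        rw [horb x hx, sub_self]
    have h0' : q 0 = q E := by
      have := h0 p (Set.mem_singleton p)
      simpa [hpdef, sub_eq_zero] using this
    have hq0 : q 0 = c ^ finrank F g := by
      simp only [hqdef, add_zero]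
      rw [← aux_eval_charpoly, hfnil.charpoly_eq_X_pow_finrank]
      simp
    calc LinearMap.det (c • (LinearMap.id : g →ₗ[F] g) - (LieAlgebra.ad F g) (f + E))
        = q E := rfl
      _ = q 0 := h0'.symm
      _ = c ^ finrank F g := hq0
  have hcp : ((LieAlgebra.ad F g) (f + E)).charpoly = X ^ finrank F g := by
    apply Polynomial.funext
    intro c
    rw [aux_eval_charpoly, key c]
    simp
  exact (LinearMap.isNilpotent_iff_charpoly _).mpr hcp
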